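/- Let the bond-price model for currency k0 be risk neutral, i.e. the processes B^{k0,k0}(·,T)/B^{c,k0} are (ℚ^{k0},𝔾)-martingales for every T. Then for k3 ≠ k0, the processes B^{k0,k3}(·,T)/B^{c,k0,k3} are (ℚ^{k0},𝔾)-martingales for every T if and only if the processes Q^{k0,k3}(·,T)/Q^{k0,k3}_· are (ℚ^{T,k0,k0},𝔾)-martingales for every T, where ℚ^{T,k0,k0} is the forward measure with density process (B^{k0,k0}(t,T)/B^{c,k0}_t)·(B^{c,k0}_0/B^{k0,k0}(0,T)). -/

import Mathlib

open MeasureTheory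

/-- The measure with density `g` with respect to `μ` (used to define forward measures). -/
noncomputable def densMeasure {Ω : Type*} {m0 : MeasurableSpace Ω}
    (μ : Measure Ω) (g : Ω → ℝ) : Measure Ω :=
  μ.withDensity fun ω => ENNReal.ofReal (g ω)

/-- Suppose the bond-price model for currency `k0` is risk neutral, i.e.
`B^{k0,k0}(·,T)/B^{c,k0}` is a `(ℚ^{k0},𝔾)`-martingale for every `T` (`hRN`). Then, for
`k3 ≠ k0`, the processes `B^{k0,k3}(·,T)/B^{c,k0,k3}` are `(ℚ^{k0},𝔾)`-martingales for
every `T` if and only if the processes `Q^{k0,k3}(·,T)/Q^{k0,k3}` are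
`(ℚ^{T,k0,k0},𝔾)`-martingales for every `T`, where `ℚ^{T,k0,k0}` is the forward measure
with density `(B^{k0,k0}(T,T)/B^{c,k0}_T)·(B^{c,k0}_0/B^{k0,k0}(0,T))`. Here
`B^{c,k0,k3} = B^{c,k0} Q^{k0,k3}` and `B^{k0,k3}(t,T) = B^{k0,k0}(t,T) Q^{k0,k3}(t,T)`. -/
theorem ccy_spread_bond_forward_martingale_iff
    {Ω : Type*} {m0 : MeasurableSpace Ω} (μ : Measure Ω) [IsProbabilityMeasure μ]
    (𝔾 : Filtration ℝ m0)
    (Bc Qacc Bc3 : ℝ → Ω → ℝ)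
    (hBc3 : ∀ t ω, Bc3 t ω = Bc t ω * Qacc t ω)
    (B Qb B3 : ℝ → ℝ → Ω → ℝ)
    (hB3 : ∀ t T ω, B3 t T ω = B t T ω * Qb t T ω)
    (hBcpos : ∀ t ω, 0 < Bc t ω) (hQpos : ∀ t ω, 0 < Qacc t ω)
    (hBpos : ∀ t T ω, 0 < B t T ω) (hQbpos : ∀ t T ω, 0 < Qb t T ω)
    (hBTT : ∀ T ω, B T T ω = 1) (hBc0 : ∀ ω, Bc 0 ω = 1) (hQ0 : ∀ ω, Qacc 0 ω = 1)
    (hadB : ∀ t T, StronglyMeasurable[𝔾 t] fun ω => B t T ω)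
    (hadQb : ∀ t T, StronglyMeasurable[𝔾 t] fun ω => Qb t T ω)
    (hadBc : ∀ t, StronglyMeasurable[𝔾 t] (Bc t))
    (hadQ : ∀ t, StronglyMeasurable[𝔾 t] (Qacc t))
    (hint1 : ∀ t T, Integrable (fun ω => B3 t T ω / Bc3 t ω) μ)
    (hint2 : ∀ T t, Integrable (fun ω => Qb t T ω / Qacc t ω)
        (densMeasure μ fun ω => Bc 0 ω * B T T ω / (Bc T ω * B 0 T ω)))
    -- risk neutrality of the k0-collateralized k0-ZCB bond-price model
    (hRN : ∀ T, 0 ≤ T → ∀ s t, 0 ≤ s → s ≤ t → t ≤ T →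
      μ[fun ω => B t T ω / Bc t ω | 𝔾 s] =ᵐ[μ] fun ω => B s T ω / Bc s ω) :
    ((∀ T, 0 ≤ T → ∀ s t, 0 ≤ s → s ≤ t → t ≤ T →
        μ[fun ω => B3 t T ω / Bc3 t ω | 𝔾 s] =ᵐ[μ] fun ω => B3 s T ω / Bc3 s ω)
      ↔
      (∀ T, 0 ≤ T → ∀ s t, 0 ≤ s → s ≤ t → t ≤ T →
        (densMeasure μ fun ω => Bc 0 ω * B T T ω / (Bc T ω * B 0 T ω))[fun ω =>
            Qb t T ω / Qacc t ω | 𝔾 s]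
          =ᵐ[densMeasure μ fun ω => Bc 0 ω * B T T ω / (Bc T ω * B 0 T ω)]
            fun ω => Qb s T ω / Qacc s ω)) := by
  haveI : (ae μ).NeBot := ae_neBot.mpr (IsProbabilityMeasure.ne_zero μ)
  suffices H : ∀ T, 0 ≤ T → ∀ s t, 0 ≤ s → s ≤ t → t ≤ T →
      ((μ[fun ω => B3 t T ω / Bc3 t ω | 𝔾 s] =ᵐ[μ] fun ω => B3 s T ω / Bc3 s ω)
        ↔
        ((densMeasure μ fun ω => Bc 0 ω * B T T ω / (Bc T ω * B 0 T ω))[fun ω =>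
            Qb t T ω / Qacc t ω | 𝔾 s]
          =ᵐ[densMeasure μ fun ω => Bc 0 ω * B T T ω / (Bc T ω * B 0 T ω)]
            fun ω => Qb s T ω / Qacc s ω)) by
    constructor <;> intro h T hT s t hs hst htT
    · exact (H T hT s t hs hst htT).mp (h T hT s t hs hst htT)
    · exact (H T hT s t hs hst htT).mpr (h T hT s t hs hst htT)
  intro T hT s t hs hst htT
  have ht : 0 ≤ t := hs.trans hst
  have hsT : s ≤ T := hst.trans htT
  set D : Ω → ℝ := fun ω => Bc 0 ω * B T T ω / (Bc T ω * B 0 T ω) with hDdef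
  -- positivity and measurability of the density
  have hDpos : ∀ ω, 0 < D ω := fun ω =>
    div_pos (mul_pos (hBcpos 0 ω) (hBpos T T ω)) (mul_pos (hBcpos T ω) (hBpos 0 T ω))
  have hmBc : ∀ r, StronglyMeasurable (Bc r) := fun r => (hadBc r).mono (𝔾.le r)
  have hmQ : ∀ r, StronglyMeasurable (Qacc r) := fun r => (hadQ r).mono (𝔾.le r)
  have hmB : ∀ r, StronglyMeasurable fun ω => B r T ω := fun r => (hadB r T).mono (𝔾.le r)
  have hmQb : ∀ r, StronglyMeasurable fun ω => Qb r T ω := fun r => (hadQb r T).mono (𝔾.le r)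
  have hDmeas : Measurable D := by
    rw [hDdef]
    exact ((hmBc 0).measurable.mul (hmB T).measurable).div
      ((hmBc T).measurable.mul (hmB 0).measurable)
  -- integrability of B(T,T)/Bc(T)
  have hMint : Integrable (fun ω => B T T ω / Bc T ω) μ := by
    by_contra h
    have h0 : μ[fun ω => B T T ω / Bc T ω | 𝔾 0] = 0 := condExp_of_not_integrable h
    have h1 := hRN T hT 0 T le_rfl hT le_rfl
    rw [h0] at h1
    obtain ⟨ω, hω⟩ := h1.exists
    simp only [Pi.zero_apply] at hω
    have hpos := div_pos (hBpos 0 T ω) (hBcpos 0 ω)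
    rw [← hω] at hpos
    exact lt_irrefl _ hpos
  -- conditional expectation at time 0, and integrability of B(0,T)
  have hB0 : μ[fun ω => B T T ω / Bc T ω | 𝔾 0] =ᵐ[μ] fun ω => B 0 T ω := by
    refine (hRN T hT 0 T le_rfl hT le_rfl).trans ?_
    filter_upwards [] with ω
    rw [hBc0, div_one]
  have hB0int : Integrable (fun ω => B 0 T ω) μ := integrable_condExp.congr hB0
  -- the density factors as (B(T,T)/Bc(T)) * (B(0,T))⁻¹
  have hDeq : ∀ ω, D ω = B T T ω / Bc T ω * (B 0 T ω)⁻¹ := by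
    intro ω
    have h1 : Bc T ω ≠ 0 := (hBcpos T ω).ne'
    have h2 : B 0 T ω ≠ 0 := (hBpos 0 T ω).ne'
    simp only [hDdef, hBc0, one_mul]
    field_simp
  -- the forward measure is a finite measure
  have hνuniv : densMeasure μ D Set.univ = 1 := by
    have hg0 : Measurable[𝔾 0] fun ω => ENNReal.ofReal ((B 0 T ω)⁻¹) :=
      (measurable_coe_nnreal_ennreal.comp measurable_real_toNNReal).comp
        (hadB 0 T).measurable.inv
    have hgm0 : Measurable fun ω => ENNReal.ofReal ((B 0 T ω)⁻¹) := hg0.mono (𝔾.le 0) le_rfl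
    have hMmeas : Measurable fun ω => ENNReal.ofReal (B T T ω / Bc T ω) :=
      (measurable_coe_nnreal_ennreal.comp measurable_real_toNNReal).comp
        ((hmB T).measurable.div (hmBc T).measurable)
    have hB0meas : Measurable fun ω => ENNReal.ofReal (B 0 T ω) :=
      (measurable_coe_nnreal_ennreal.comp measurable_real_toNNReal).comp (hmB 0).measurable
    set κ₁ := μ.withDensity fun ω => ENNReal.ofReal (B T T ω / Bc T ω) with hκ₁
    set κ₂ := μ.withDensity fun ω => ENNReal.ofReal (B 0 T ω) with hκ₂
    have htrim : κ₁.trim (𝔾.le 0) = κ₂.trim (𝔾.le 0) := by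
      refine @Measure.ext Ω (𝔾 0) _ _ fun A hA => ?_
      have hA0 : MeasurableSet A := 𝔾.le 0 _ hA
      rw [trim_measurableSet_eq _ hA, trim_measurableSet_eq _ hA, hκ₁, hκ₂,
        withDensity_apply _ hA0, withDensity_apply _ hA0,
        ← ofReal_integral_eq_lintegral_ofReal hMint.integrableOn
          (Filter.Eventually.of_forall fun ω => (div_pos (hBpos T T ω) (hBcpos T ω)).le),
        ← ofReal_integral_eq_lintegral_ofReal hB0int.integrableOn
          (Filter.Eventually.of_forall fun ω => (hBpos 0 T ω).le)]
      congr 1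
      rw [← setIntegral_condExp (𝔾.le 0) hMint hA]
      exact integral_congr_ae (ae_restrict_of_ae hB0)
    have hcalc : ∫⁻ ω, ENNReal.ofReal (D ω) ∂μ = 1 := by
      have e1 : ∀ ω, ENNReal.ofReal (D ω)
          = ENNReal.ofReal (B T T ω / Bc T ω) * ENNReal.ofReal ((B 0 T ω)⁻¹) := by
        intro ω
        rw [hDeq ω, ENNReal.ofReal_mul (div_pos (hBpos T T ω) (hBcpos T ω)).le]
      calc ∫⁻ ω, ENNReal.ofReal (D ω) ∂μ
          = ∫⁻ ω, ENNReal.ofReal (B T T ω / Bc T ω) * ENNReal.ofReal ((B 0 T ω)⁻¹) ∂μ := by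
            exact lintegral_congr e1
        _ = ∫⁻ ω, ENNReal.ofReal ((B 0 T ω)⁻¹) ∂κ₁ := by
            rw [hκ₁, lintegral_withDensity_eq_lintegral_mul μ hMmeas hgm0]; rfl
        _ = ∫⁻ ω, ENNReal.ofReal ((B 0 T ω)⁻¹) ∂(κ₁.trim (𝔾.le 0)) :=
            (lintegral_trim (𝔾.le 0) hg0).symm
        _ = ∫⁻ ω, ENNReal.ofReal ((B 0 T ω)⁻¹) ∂(κ₂.trim (𝔾.le 0)) := by rw [htrim]
        _ = ∫⁻ ω, ENNReal.ofReal ((B 0 T ω)⁻¹) ∂κ₂ := lintegral_trim (𝔾.le 0) hg0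
        _ = ∫⁻ ω, ENNReal.ofReal (B 0 T ω) * ENNReal.ofReal ((B 0 T ω)⁻¹) ∂μ := by
            rw [hκ₂, lintegral_withDensity_eq_lintegral_mul μ hB0meas hgm0]; rfl
        _ = ∫⁻ _, 1 ∂μ := by
            refine lintegral_congr fun ω => ?_
            rw [← ENNReal.ofReal_mul (hBpos 0 T ω).le,
              mul_inv_cancel₀ (hBpos 0 T ω).ne', ENNReal.ofReal_one]
        _ = 1 := by simp
    rw [densMeasure, withDensity_apply _ MeasurableSet.univ, Measure.restrict_univ, hcalc]
  haveI hνfin : IsFiniteMeasure (densMeasure μ D) :=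
    ⟨by rw [hνuniv]; exact ENNReal.one_lt_top⟩
  -- transfer of set integrals between ν and μ
  have hsetν : ∀ (f : Ω → ℝ) (A : Set Ω), MeasurableSet A →
      ∫ ω in A, f ω ∂(densMeasure μ D) = ∫ ω in A, f ω * D ω ∂μ := by
    intro f A hA
    rw [densMeasure, restrict_withDensity hA]
    have : (fun ω => ENNReal.ofReal (D ω))
        = fun ω => (((D ω).toNNReal : NNReal) : ENNReal) := rfl
    rw [this, integral_withDensity_eq_integral_smul (hDmeas.real_toNNReal) f]
    refine integral_congr_ae (Filter.Eventually.of_forall fun ω => ?_)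
    simp only [NNReal.smul_def, smul_eq_mul]
    rw [Real.coe_toNNReal _ (hDpos ω).le, mul_comm]
  -- ν-integrability of the spread ratios
  have hIν : ∀ r, Integrable (fun ω => Qb r T ω / Qacc r ω) (densMeasure μ D) := by
    intro r
    rw [hDdef]
    exact hint2 T r
  -- μ-integrability of the spread ratios times the density
  have hXD_int : ∀ r, Integrable (fun ω => Qb r T ω / Qacc r ω * D ω) μ := by
    intro r
    have h := (integrable_withDensity_iff
        ((measurable_coe_nnreal_ennreal.comp measurable_real_toNNReal).comp hDmeas)
        (Filter.Eventually.of_forall fun ω => ENNReal.ofReal_lt_top)).mp (hIν r)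
    refine h.congr (Filter.Eventually.of_forall fun ω => ?_)
    simp only [Function.comp_apply]
    rw [show (ENNReal.ofNNReal (Real.toNNReal (D ω))) = ENNReal.ofReal (D ω) from rfl,
      ENNReal.toReal_ofReal (hDpos ω).le]
  -- the one-step conditional expectation identity at time r
  have hcond1 : ∀ r, 0 ≤ r → r ≤ T →
      μ[fun ω => Qb r T ω / Qacc r ω * D ω | 𝔾 r]
        =ᵐ[μ] fun ω => B3 r T ω / Bc3 r ω / B 0 T ω := by
    intro r hr hrT
    have hfm : StronglyMeasurable[𝔾 r] fun ω => Qb r T ω / (Qacc r ω * B 0 T ω) := by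
      have : Measurable[𝔾 r] fun ω => Qb r T ω / (Qacc r ω * B 0 T ω) :=
        (hadQb r T).measurable.div
          ((hadQ r).measurable.mul ((hadB 0 T).mono (𝔾.mono hr)).measurable)
      exact this.stronglyMeasurable
    have heq : ((fun ω => Qb r T ω / (Qacc r ω * B 0 T ω)) * fun ω => B T T ω / Bc T ω)
        = fun ω => Qb r T ω / Qacc r ω * D ω := by
      funext ω
      have h1 : Qacc r ω ≠ 0 := (hQpos r ω).ne'
      have h2 : B 0 T ω ≠ 0 := (hBpos 0 T ω).ne'
      have h3 : Bc T ω ≠ 0 := (hBcpos T ω).ne'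
      simp only [Pi.mul_apply, hDdef, hBc0, one_mul]
      rw [div_mul_div_comm, div_mul_div_comm]
      congr 1
      ring
    have hint_fg : Integrable
        ((fun ω => Qb r T ω / (Qacc r ω * B 0 T ω)) * fun ω => B T T ω / Bc T ω) μ := by
      rw [heq]; exact hXD_int r
    have hpull := condExp_mul_of_stronglyMeasurable_left hfm hint_fg hMint
    have hRNr : μ[fun ω => B T T ω / Bc T ω | 𝔾 r] =ᵐ[μ] fun ω => B r T ω / Bc r ω :=
      hRN T hT r T hr hrT le_rfl
    calc μ[fun ω => Qb r T ω / Qacc r ω * D ω | 𝔾 r]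
        = μ[(fun ω => Qb r T ω / (Qacc r ω * B 0 T ω)) * fun ω => B T T ω / Bc T ω | 𝔾 r] := by
          rw [heq]
      _ =ᵐ[μ] (fun ω => Qb r T ω / (Qacc r ω * B 0 T ω))
            * μ[fun ω => B T T ω / Bc T ω | 𝔾 r] := hpull
      _ =ᵐ[μ] fun ω => B3 r T ω / Bc3 r ω / B 0 T ω := by
          filter_upwards [hRNr] with ω hω
          simp only [Pi.mul_apply]
          rw [hω, hB3, hBc3]
          have h1 : Qacc r ω ≠ 0 := (hQpos r ω).ne'
          have h2 : B 0 T ω ≠ 0 := (hBpos 0 T ω).ne'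
          have h3 : Bc r ω ≠ 0 := (hBcpos r ω).ne'
          field_simp
  have hYint : ∀ r, Integrable (fun ω => B3 r T ω / Bc3 r ω) μ := fun r => hint1 r T
  have hYdiv_int : ∀ r, 0 ≤ r → r ≤ T →
      Integrable (fun ω => B3 r T ω / Bc3 r ω / B 0 T ω) μ := fun r hr hrT =>
    integrable_condExp.congr (hcond1 r hr hrT)
  -- the two-step (tower) conditional expectation identity
  have hcond2 : ∀ r, r ≤ T → s ≤ r →
      μ[fun ω => Qb r T ω / Qacc r ω * D ω | 𝔾 s]
        =ᵐ[μ] fun ω => (μ[fun ω' => B3 r T ω' / Bc3 r ω' | 𝔾 s]) ω / B 0 T ω := by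
    intro r hrT hsr
    have hr : 0 ≤ r := hs.trans hsr
    have htower := (condExp_condExp_of_le (μ := μ)
      (f := fun ω => Qb r T ω / Qacc r ω * D ω) (𝔾.mono hsr) (𝔾.le r)).symm
    have hinvm : StronglyMeasurable[𝔾 s] fun ω => (B 0 T ω)⁻¹ := by
      have : Measurable[𝔾 s] fun ω => (B 0 T ω)⁻¹ :=
        ((hadB 0 T).mono (𝔾.mono hs)).measurable.inv
      exact this.stronglyMeasurable
    have heq2 : ((fun ω => (B 0 T ω)⁻¹) * fun ω => B3 r T ω / Bc3 r ω)
        = fun ω => B3 r T ω / Bc3 r ω / B 0 T ω := by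
      funext ω
      simp only [Pi.mul_apply]
      ring
    have hint_fg2 : Integrable
        ((fun ω => (B 0 T ω)⁻¹) * fun ω => B3 r T ω / Bc3 r ω) μ := by
      rw [heq2]; exact hYdiv_int r hr hrT
    have hpull2 := condExp_mul_of_stronglyMeasurable_left hinvm hint_fg2 (hYint r)
    calc μ[fun ω => Qb r T ω / Qacc r ω * D ω | 𝔾 s]
        =ᵐ[μ] μ[μ[fun ω => Qb r T ω / Qacc r ω * D ω | 𝔾 r] | 𝔾 s] := htower
      _ =ᵐ[μ] μ[fun ω => B3 r T ω / Bc3 r ω / B 0 T ω | 𝔾 s] :=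
          condExp_congr_ae (hcond1 r hr hrT)
      _ = μ[(fun ω => (B 0 T ω)⁻¹) * fun ω => B3 r T ω / Bc3 r ω | 𝔾 s] := by rw [heq2]
      _ =ᵐ[μ] (fun ω => (B 0 T ω)⁻¹) * μ[fun ω' => B3 r T ω' / Bc3 r ω' | 𝔾 s] := hpull2
      _ = fun ω => (μ[fun ω' => B3 r T ω' / Bc3 r ω' | 𝔾 s]) ω / B 0 T ω := by
          funext ω
          simp only [Pi.mul_apply]
          ring
  -- measurability and conditional expectation of Y s
  have hYs_meas : StronglyMeasurable[𝔾 s] fun ω => B3 s T ω / Bc3 s ω := by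
    have : (fun ω => B3 s T ω / Bc3 s ω)
        = fun ω => B s T ω * Qb s T ω / (Bc s ω * Qacc s ω) := by
      funext ω; rw [hB3, hBc3]
    rw [this]
    have : Measurable[𝔾 s] fun ω => B s T ω * Qb s T ω / (Bc s ω * Qacc s ω) :=
      ((hadB s T).measurable.mul (hadQb s T).measurable).div
        ((hadBc s).measurable.mul (hadQ s).measurable)
    exact this.stronglyMeasurable
  have hcondYs : μ[fun ω => B3 s T ω / Bc3 s ω | 𝔾 s] = fun ω => B3 s T ω / Bc3 s ω :=
    condExp_of_stronglyMeasurable (𝔾.le s) hYs_meas (hYint s)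
  -- conditional expectation of X s * D given 𝔾 s
  have hXsD : μ[fun ω => Qb s T ω / Qacc s ω * D ω | 𝔾 s]
      =ᵐ[μ] fun ω => B3 s T ω / Bc3 s ω / B 0 T ω := by
    refine (hcond2 s hsT le_rfl).trans ?_
    rw [hcondYs]
  constructor
  · -- μ-martingale of B3/Bc3 implies ν-martingale of Qb/Qacc
    intro h1
    have key_t : μ[fun ω => Qb t T ω / Qacc t ω * D ω | 𝔾 s]
        =ᵐ[μ] fun ω => B3 s T ω / Bc3 s ω / B 0 T ω := by
      refine (hcond2 t htT hst).trans ?_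
      filter_upwards [h1] with ω hω
      rw [hω]
    refine (ae_eq_condExp_of_forall_setIntegral_eq (𝔾.le s) (hIν t)
      (fun A _ _ => (hIν s).integrableOn) (fun A hA _ => ?_)
      ((Measurable.stronglyMeasurable
        ((hadQb s T).measurable.div (hadQ s).measurable)).aestronglyMeasurable)).symm
    have hAm : MeasurableSet A := 𝔾.le s _ hA
    rw [hsetν _ A hAm, hsetν _ A hAm,
      ← setIntegral_condExp (𝔾.le s) (hXD_int s) hA,
      ← setIntegral_condExp (𝔾.le s) (hXD_int t) hA]
    rw [integral_congr_ae (ae_restrict_of_ae key_t), integral_congr_ae (ae_restrict_of_ae hXsD)]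
  · -- ν-martingale of Qb/Qacc implies μ-martingale of B3/Bc3
    intro h2
    have hsetν_eq : ∀ A, MeasurableSet[𝔾 s] A →
        ∫ ω in A, Qb t T ω / Qacc t ω * D ω ∂μ = ∫ ω in A, Qb s T ω / Qacc s ω * D ω ∂μ := by
      intro A hA
      have hAm : MeasurableSet A := 𝔾.le s _ hA
      rw [← hsetν _ A hAm, ← hsetν _ A hAm,
        ← setIntegral_condExp (𝔾.le s) (hIν t) hA]
      exact integral_congr_ae (ae_restrict_of_ae h2)
    have hcc : μ[fun ω => Qb t T ω / Qacc t ω * D ω | 𝔾 s]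
        =ᵐ[μ] μ[fun ω => Qb s T ω / Qacc s ω * D ω | 𝔾 s] := by
      refine ae_eq_condExp_of_forall_setIntegral_eq (𝔾.le s) (hXD_int s)
        (fun A _ _ => integrable_condExp.integrableOn) (fun A hA _ => ?_)
        (stronglyMeasurable_condExp.aestronglyMeasurable)
      rw [setIntegral_condExp (𝔾.le s) (hXD_int t) hA]
      exact hsetν_eq A hA
    have h3 : (fun ω => (μ[fun ω' => B3 t T ω' / Bc3 t ω' | 𝔾 s]) ω / B 0 T ω)
        =ᵐ[μ] fun ω => B3 s T ω / Bc3 s ω / B 0 T ω :=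
      (hcond2 t htT hst).symm.trans (hcc.trans hXsD)
    filter_upwards [h3] with ω hω
    have hb : B 0 T ω ≠ 0 := (hBpos 0 T ω).ne'
    have := congrArg (· * B 0 T ω) hω
    simpa [div_mul_cancel₀, hb] using this
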